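/- Backward conditional sampler correctness: in the Poisson–multinomial setting with independent categoricals ℓ_i ~ p_i on {1,…,d}, fix a target counts vector m with Σ_k m_k = ν and P(M = m) > 0. Define a sequential sampler that for i = ν down to 1 draws ℓ_i = k with probability q_i(k | m^(i)) = p_i(k) W^(i−1)_{m^(i) − e_k} / W^(i)_{m^(i)} and updates m^(i−1) = m^(i) − e_{ℓ_i}, starting from m^(ν) = m. Then (i) for each i, q_i(k | m^(i)) = P(ℓ_i = k | M^(i) = m^(i)); and (ii) the output sequence (ℓ₁,…,ℓ_ν) is distributed exactly as the conditional law of (ℓ₁,…,ℓ_ν) given M = m. -/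

import Mathlib

open Finset

/-- Counts vector of a finite sequence. -/
def countsOf {d i : ℕ} (ℓ : Fin i → Fin d) (k : Fin d) : ℕ :=
  (Finset.univ.filter fun j => ℓ j = k).card

/-- Forward DP for Poisson–multinomial prefix probabilities. -/
noncomputable def Wdp (d : ℕ) (p : ℕ → Fin d → ℝ) : ℕ → (Fin d → ℕ) → ℝ
  | 0, m => if m = fun _ => 0 then 1 else 0
  | i + 1, m =>
      ∑ k : Fin d, if m k = 0 then 0
        else p i k * Wdp d p i (Function.update m k (m k - 1))

/-- `P(M⁽ⁱ⁾ = m)`: probability that the counts vector of the length-`i` prefix equals `m`. -/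
noncomputable def prCounts (d : ℕ) (p : ℕ → Fin d → ℝ) (i : ℕ) (m : Fin d → ℕ) : ℝ :=
  ∑ ℓ : Fin i → Fin d,
    (∏ j : Fin i, p (j : ℕ) (ℓ j)) * (if ∀ k, countsOf ℓ k = m k then 1 else 0)

/-- `P(ℓ_{i+1} = k₀ ∧ M⁽ⁱ⁺¹⁾ = m)`. -/
noncomputable def prLastAndCounts (d : ℕ) (p : ℕ → Fin d → ℝ) (i : ℕ) (k₀ : Fin d)
    (m : Fin d → ℕ) : ℝ :=
  ∑ ℓ : Fin (i + 1) → Fin d,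
    (∏ j : Fin (i + 1), p (j : ℕ) (ℓ j)) *
      (if ℓ (Fin.last i) = k₀ ∧ ∀ k, countsOf ℓ k = m k then 1 else 0)

/-- The backward sampler's transition probability `q_{i+1}(k | m) =
p_{i+1}(k) W⁽ⁱ⁾_{m−e_k} / W⁽ⁱ⁺¹⁾_m` (zero when `m k = 0`). -/
noncomputable def qstep (d : ℕ) (p : ℕ → Fin d → ℝ) (i : ℕ) (k : Fin d)
    (m : Fin d → ℕ) : ℝ :=
  if m k = 0 then 0
  else p i k * Wdp d p i (Function.update m k (m k - 1)) / Wdp d p (i + 1) m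

/-- Counts vector of the first `t` entries of `ℓ : Fin ν → Fin d`. -/
def cntPrefix {d ν : ℕ} (ℓ : Fin ν → Fin d) (t : ℕ) (k : Fin d) : ℕ :=
  (Finset.univ.filter fun j : Fin ν => (j : ℕ) < t ∧ ℓ j = k).card

/- ### Auxiliary lemmas -/

lemma countsOf_snoc {d i : ℕ} (g : Fin i → Fin d) (k k' : Fin d) :
    countsOf (Fin.snoc g k) k' = countsOf g k' + if k = k' then 1 else 0 := by
  simp only [countsOf, Finset.card_filter]
  rw [Fin.sum_univ_castSucc]
  simp [Fin.snoc_castSucc, Fin.snoc_last]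

lemma counts_cond_iff {d i : ℕ} (g : Fin i → Fin d) (k : Fin d) (m : Fin d → ℕ) :
    (∀ k', countsOf (Fin.snoc g k) k' = m k') ↔
      (m k ≠ 0 ∧ ∀ k', countsOf g k' = Function.update m k (m k - 1) k') := by
  constructor
  · intro h
    have hk := h k
    rw [countsOf_snoc, if_pos rfl] at hk
    refine ⟨by omega, fun k' => ?_⟩
    by_cases hkk : k' = k
    · subst hkk; rw [Function.update_self]; omega
    · rw [Function.update_of_ne hkk]
      have := h k'
      rw [countsOf_snoc, if_neg (Ne.symm hkk)] at this
      omega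
  · rintro ⟨h0, h⟩ k'
    rw [countsOf_snoc]
    by_cases hkk : k' = k
    · subst hkk
      have := h k'; rw [Function.update_self] at this
      rw [if_pos rfl]; omega
    · have := h k'; rw [Function.update_of_ne hkk] at this
      rw [if_neg (Ne.symm hkk)]; simpa using this

lemma snoc_prod {d i : ℕ} (p : ℕ → Fin d → ℝ) (g : Fin i → Fin d) (k : Fin d) :
    (∏ j : Fin (i+1), p (j:ℕ) ((Fin.snoc g k : Fin (i+1) → Fin d) j))
      = (∏ j : Fin i, p (j:ℕ) (g j)) * p i k := by
  rw [Fin.prod_univ_castSucc]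
  simp [Fin.snoc_castSucc, Fin.snoc_last]

lemma prCounts_eq_Wdp {d : ℕ} (p : ℕ → Fin d → ℝ) :
    ∀ i m, prCounts d p i m = Wdp d p i m := by
  intro i
  induction i with
  | zero =>
    intro m
    simp [prCounts, Wdp, countsOf, funext_iff, eq_comm, Finset.sum_unique_nonempty]
  | succ i ih =>
    intro m
    have hsum : prCounts d p (i+1) m
        = ∑ x : Fin d × (Fin i → Fin d),
            (∏ j : Fin (i+1), p (j:ℕ) ((Fin.snoc x.2 x.1 : Fin (i+1) → Fin d) j)) *
              (if ∀ k, countsOf (Fin.snoc x.2 x.1 : Fin (i+1) → Fin d) k = m k then 1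
               else 0) := by
      rw [prCounts]
      exact (Fintype.sum_equiv (Fin.snocEquiv (fun _ => Fin d)) _ _ (fun x => by
        simp [Fin.snocEquiv]
        by_cases hc : ∀ k, countsOf (Fin.snoc x.2 x.1 : Fin (i+1) → Fin d) k = m k <;>
          simp [hc])).symm
    rw [hsum, Fintype.sum_prod_type]
    show _ = ∑ k : Fin d, if m k = 0 then 0
          else p i k * Wdp d p i (Function.update m k (m k - 1))
    refine Finset.sum_congr rfl fun k _ => ?_
    by_cases h0 : m k = 0
    · rw [if_pos h0]
      refine Finset.sum_eq_zero fun g _ => ?_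
      rw [if_neg, mul_zero]
      rw [counts_cond_iff]
      exact fun hc => hc.1 h0
    · rw [if_neg h0, ← ih, prCounts, Finset.mul_sum]
      refine Finset.sum_congr rfl fun g _ => ?_
      have hiff : (∀ k', countsOf (Fin.snoc g k : Fin (i+1) → Fin d) k' = m k')
          ↔ (∀ k', countsOf g k' = Function.update m k (m k - 1) k') := by
        rw [counts_cond_iff]
        exact ⟨fun h => h.2, fun h => ⟨h0, h⟩⟩
      rw [snoc_prod, if_congr hiff rfl rfl]
      ring

lemma prLastAndCounts_eq {d : ℕ} (p : ℕ → Fin d → ℝ) (i : ℕ) (k₀ : Fin d)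
    (m : Fin d → ℕ) :
    prLastAndCounts d p i k₀ m
      = if m k₀ = 0 then 0
        else p i k₀ * Wdp d p i (Function.update m k₀ (m k₀ - 1)) := by
  have hsum : prLastAndCounts d p i k₀ m
      = ∑ x : Fin d × (Fin i → Fin d),
          (∏ j : Fin (i+1), p (j:ℕ) ((Fin.snoc x.2 x.1 : Fin (i+1) → Fin d) j)) *
            (if (Fin.snoc x.2 x.1 : Fin (i+1) → Fin d) (Fin.last i) = k₀ ∧
                ∀ k, countsOf (Fin.snoc x.2 x.1 : Fin (i+1) → Fin d) k = m k then 1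
             else 0) := by
    rw [prLastAndCounts]
    exact (Fintype.sum_equiv (Fin.snocEquiv (fun _ => Fin d)) _ _ (fun x => by
      simp [Fin.snocEquiv])).symm
  rw [hsum, Fintype.sum_prod_type]
  rw [Finset.sum_eq_single k₀]
  · by_cases h0 : m k₀ = 0
    · rw [if_pos h0]
      refine Finset.sum_eq_zero fun g _ => ?_
      rw [if_neg, mul_zero]
      rintro ⟨-, hc⟩
      exact ((counts_cond_iff g k₀ m).1 hc).1 h0
    · rw [if_neg h0, ← prCounts_eq_Wdp, prCounts, Finset.mul_sum]
      refine Finset.sum_congr rfl fun g _ => ?_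
      have hiff : ((Fin.snoc g k₀ : Fin (i+1) → Fin d) (Fin.last i) = k₀ ∧
            ∀ k', countsOf (Fin.snoc g k₀ : Fin (i+1) → Fin d) k' = m k')
          ↔ (∀ k', countsOf g k' = Function.update m k₀ (m k₀ - 1) k') := by
        rw [Fin.snoc_last, counts_cond_iff]
        exact ⟨fun h => h.2.2, fun h => ⟨rfl, h0, h⟩⟩
      rw [snoc_prod, if_congr hiff rfl rfl]
      ring
  · intro k _ hk
    refine Finset.sum_eq_zero fun g _ => ?_
    rw [if_neg, mul_zero]
    rintro ⟨hc, -⟩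
    rw [Fin.snoc_last] at hc
    exact hk hc
  · intro h
    exact absurd (Finset.mem_univ k₀) h

lemma cntPrefix_zero {d ν : ℕ} (ℓ : Fin ν → Fin d) : cntPrefix ℓ 0 = fun _ => 0 := by
  funext k
  simp [cntPrefix]

lemma cntPrefix_top {d ν : ℕ} (ℓ : Fin ν → Fin d) (k : Fin d) :
    cntPrefix ℓ ν k = countsOf ℓ k := by
  unfold cntPrefix countsOf
  congr 1
  apply Finset.filter_congr
  intro j _
  simp [j.isLt]

lemma cntPrefix_succ {d ν : ℕ} (ℓ : Fin ν → Fin d) (i : Fin ν) (k : Fin d) :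
    cntPrefix ℓ ((i:ℕ)+1) k = cntPrefix ℓ (i:ℕ) k + if ℓ i = k then 1 else 0 := by
  unfold cntPrefix
  simp only [Finset.card_filter]
  rw [show (if ℓ i = k then 1 else 0)
        = ∑ j : Fin ν, if (j:ℕ) = (i:ℕ) ∧ ℓ j = k then 1 else 0 by
      rw [Finset.sum_eq_single i]
      · simp
      · intro j _ hj
        rw [if_neg]
        rintro ⟨hji, -⟩
        exact hj (Fin.ext hji)
      · intro h; exact absurd (Finset.mem_univ i) h]
  rw [← Finset.sum_add_distrib]
  refine Finset.sum_congr rfl fun j _ => ?_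
  by_cases h : ℓ j = k
  · simp only [h, and_true]
    split_ifs <;> omega
  · simp [h]

lemma cntPrefix_restrict {d ν : ℕ} (ℓ : Fin ν → Fin d) (t : ℕ) (ht : t ≤ ν) (k : Fin d) :
    countsOf (fun j : Fin t => ℓ (Fin.castLE ht j)) k = cntPrefix ℓ t k := by
  unfold countsOf cntPrefix
  apply Finset.card_nbij (fun j => Fin.castLE ht j)
  · intro j hj
    simp only [Finset.mem_coe, Finset.mem_filter, Finset.mem_univ, true_and] at hj ⊢
    exact ⟨j.isLt, hj⟩
  · intro a ha b hb hab
    exact Fin.ext (by simpa using congrArg Fin.val hab)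
  · intro j hj
    simp only [Finset.coe_filter, Finset.mem_univ, true_and, Set.mem_setOf_eq,
      Set.mem_image] at hj ⊢
    exact ⟨⟨(j:ℕ), hj.1⟩, hj.2, rfl⟩

lemma telescope (n : ℕ) (a W : ℕ → ℝ) (hW : ∀ i, i ≤ n → W i ≠ 0) :
    ∏ i ∈ Finset.range n, (a i * W i / W (i+1))
      = (∏ i ∈ Finset.range n, a i) * W 0 / W n := by
  induction n with
  | zero => simp [div_self (hW 0 le_rfl)]
  | succ n ih =>
    rw [Finset.prod_range_succ, ih (fun i hi => hW i (hi.trans (Nat.le_succ n))),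
      Finset.prod_range_succ]
    field_simp [hW n (Nat.le_succ n), hW (n+1) le_rfl]

/-- **Backward conditional sampler correctness.** -/
theorem backward_sampler_correct
    {d ν : ℕ} (hd : 1 ≤ d) (p : ℕ → Fin d → ℝ)
    (hp0 : ∀ i k, 0 ≤ p i k) (hp1 : ∀ i, ∑ k, p i k = 1)
    (m : Fin d → ℕ) (hm : (∑ k, m k) = ν) (hpos : 0 < Wdp d p ν m) :
    (∀ i < ν, ∀ m' : Fin d → ℕ, (∑ k, m' k) = i + 1 → 0 < Wdp d p (i + 1) m' →
        ∀ k, qstep d p i k m' = prLastAndCounts d p i k m' / prCounts d p (i + 1) m') ∧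
    (∀ ℓ : Fin ν → Fin d, (∀ k, countsOf ℓ k = m k) →
        (∏ i : Fin ν, qstep d p (i : ℕ) (ℓ i) (cntPrefix ℓ ((i : ℕ) + 1)))
          = (∏ i : Fin ν, p (i : ℕ) (ℓ i)) / prCounts d p ν m) := by
  constructor
  · intro i _ m' _ _ k
    rw [prLastAndCounts_eq, prCounts_eq_Wdp, qstep]
    by_cases h0 : m' k = 0
    · rw [if_pos h0, if_pos h0, zero_div]
    · rw [if_neg h0, if_neg h0]
  · intro ℓ hℓ
    set Wseq : ℕ → ℝ := fun t => Wdp d p t (cntPrefix ℓ t) with hWseq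
    have hcnt_top : cntPrefix ℓ ν = m := funext fun k => (cntPrefix_top ℓ k).trans (hℓ k)
    have hWν : Wseq ν = Wdp d p ν m := by rw [hWseq]; simp only [hcnt_top]
    have hW0 : Wseq 0 = 1 := by
      rw [hWseq]; simp only [cntPrefix_zero]
      show (if (fun _ : Fin d => 0) = fun _ => 0 then (1:ℝ) else 0) = 1
      rw [if_pos rfl]
    have hsucc : ∀ i : Fin ν,
        cntPrefix ℓ ((i:ℕ)+1) (ℓ i) = cntPrefix ℓ (i:ℕ) (ℓ i) + 1 := by
      intro i; rw [cntPrefix_succ, if_pos rfl]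
    have hupd : ∀ i : Fin ν,
        Function.update (cntPrefix ℓ ((i:ℕ)+1)) (ℓ i)
          (cntPrefix ℓ ((i:ℕ)+1) (ℓ i) - 1) = cntPrefix ℓ (i:ℕ) := by
      intro i
      funext k
      by_cases hk : k = ℓ i
      · subst hk; rw [Function.update_self, hsucc i]; omega
      · rw [Function.update_of_ne hk, cntPrefix_succ,
          if_neg (fun h => hk h.symm), add_zero]
    have hq : ∀ i : Fin ν, qstep d p (i:ℕ) (ℓ i) (cntPrefix ℓ ((i:ℕ)+1))
        = p (i:ℕ) (ℓ i) * Wseq (i:ℕ) / Wseq ((i:ℕ)+1) := by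
      intro i
      rw [qstep, if_neg (by rw [hsucc i]; omega), hupd i]
    rw [prCounts_eq_Wdp, ← hWν]
    by_cases hz : ∃ i : Fin ν, p (i:ℕ) (ℓ i) = 0
    · obtain ⟨i, hi⟩ := hz
      rw [Finset.prod_eq_zero (Finset.mem_univ i) (by rw [hq i, hi, zero_mul, zero_div]),
        Finset.prod_eq_zero (Finset.mem_univ i) hi, zero_div]
    · push_neg at hz
      have hppos : ∀ i : Fin ν, 0 < p (i:ℕ) (ℓ i) :=
        fun i => (hp0 (i:ℕ) (ℓ i)).lt_of_ne' (hz i)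
      have hWpos : ∀ t, t ≤ ν → 0 < Wseq t := by
        intro t ht
        show 0 < Wdp d p t (cntPrefix ℓ t)
        rw [← prCounts_eq_Wdp, prCounts]
        have hterm : (0:ℝ) < (∏ j : Fin t, p (j:ℕ) ((fun j => ℓ (Fin.castLE ht j)) j)) *
            (if ∀ k, countsOf (fun j : Fin t => ℓ (Fin.castLE ht j)) k
                = cntPrefix ℓ t k then 1 else 0) := by
          rw [if_pos (fun k => cntPrefix_restrict ℓ t ht k), mul_one]
          refine Finset.prod_pos fun j _ => ?_
          have := hppos (Fin.castLE ht j)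
          simpa using this
        refine lt_of_lt_of_le hterm (Finset.single_le_sum
          (f := fun g : Fin t → Fin d => (∏ j : Fin t, p (j:ℕ) (g j)) *
            (if ∀ k, countsOf g k = cntPrefix ℓ t k then 1 else 0))
          (fun g _ => ?_) (Finset.mem_univ (fun j : Fin t => ℓ (Fin.castLE ht j))))
        refine mul_nonneg (Finset.prod_nonneg fun j _ => hp0 _ _) ?_
        split_ifs <;> norm_num
      set A : ℕ → ℝ := fun t => if h : t < ν then p t (ℓ ⟨t, h⟩) else 1 with hA
      have hAeq : ∀ i : Fin ν, A (i:ℕ) = p (i:ℕ) (ℓ i) := by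
        intro i
        rw [hA]
        simp only [i.isLt, dif_pos, Fin.eta]
      calc (∏ i : Fin ν, qstep d p (i:ℕ) (ℓ i) (cntPrefix ℓ ((i:ℕ)+1)))
          = ∏ i : Fin ν, (A (i:ℕ) * Wseq (i:ℕ) / Wseq ((i:ℕ)+1)) := by
            refine Finset.prod_congr rfl fun i _ => ?_
            rw [hq i, hAeq i]
        _ = ∏ t ∈ Finset.range ν, (A t * Wseq t / Wseq (t+1)) :=
            Fin.prod_univ_eq_prod_range (fun t => A t * Wseq t / Wseq (t+1)) ν
        _ = (∏ t ∈ Finset.range ν, A t) * Wseq 0 / Wseq ν :=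
            telescope ν A Wseq (fun t ht => (hWpos t ht).ne')
        _ = (∏ i : Fin ν, p (i:ℕ) (ℓ i)) / Wseq ν := by
            rw [hW0, mul_one,
              ← Fin.prod_univ_eq_prod_range (fun t => A t) ν]
            congr 1
            exact Finset.prod_congr rfl fun i _ => hAeq i
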